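/- The projection of Sp(2) to its first row is surjective onto S⁷: for every (a,c) ∈ ℍ × ℍ with ‖a‖² + ‖c‖² = 1 there exists a unitary 2×2 quaternionic matrix whose first row is (a,c). -/

import Mathlib

set_option maxHeartbeats 1000000 in
/-- The projection of `Sp(2)` to its first row is surjective onto `S⁷`:
for every `(a,c) ∈ ℍ × ℍ` with `‖a‖² + ‖c‖² = 1` there is a unitary 2×2 quaternionic
matrix whose first row is `(a, c)`. -/
theorem sp2_firstRow_surjective (a c : Quaternion ℝ) (h : ‖a‖ ^ 2 + ‖c‖ ^ 2 = 1) :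
    ∃ A ∈ unitary (Matrix (Fin 2) (Fin 2) (Quaternion ℝ)), A 0 0 = a ∧ A 0 1 = c := by
  by_cases ha : a = 0
  · subst ha
    have hc : c * star c = 1 := by
      rw [Quaternion.self_mul_star, Quaternion.normSq_eq_norm_mul_self]
      have : ‖c‖ = 1 := by
        have : ‖c‖ ^ 2 = 1 := by simpa using h
        nlinarith [norm_nonneg c]
      simp [this]
    have hc' : star c * c = 1 := by
      rw [Quaternion.star_mul_self, Quaternion.normSq_eq_norm_mul_self]
      have : ‖c‖ = 1 := by
        have : ‖c‖ ^ 2 = 1 := by simpa using h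
        nlinarith [norm_nonneg c]
      simp [this]
    refine ⟨!![0, c; 1, 0], ⟨?_, ?_⟩, by simp, by simp⟩ <;>
    · refine Matrix.ext fun i j => ?_
      rw [Matrix.star_eq_conjTranspose]
      fin_cases i <;> fin_cases j <;>
        simp [Matrix.mul_apply, Fin.sum_univ_two, Matrix.conjTranspose_apply, hc, hc',
          Matrix.one_apply]
  · set Na : ℝ := ‖a‖ ^ 2 with hNA
    set Nc : ℝ := ‖c‖ ^ 2 with hNC
    set r : ℝ := Na⁻¹ with hr
    have hNa0 : Na ≠ 0 := pow_ne_zero 2 (norm_ne_zero_iff.2 ha)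
    have hNa : a * star a = ((Na : ℝ) : Quaternion ℝ) := by
      rw [Quaternion.self_mul_star, hNA, Quaternion.normSq_eq_norm_mul_self, sq]
    have hNa' : star a * a = ((Na : ℝ) : Quaternion ℝ) := by
      rw [Quaternion.star_mul_self, hNA, Quaternion.normSq_eq_norm_mul_self, sq]
    have hNc : c * star c = ((Nc : ℝ) : Quaternion ℝ) := by
      rw [Quaternion.self_mul_star, hNC, Quaternion.normSq_eq_norm_mul_self, sq]
    have hNc' : star c * c = ((Nc : ℝ) : Quaternion ℝ) := by
      rw [Quaternion.star_mul_self, hNC, Quaternion.normSq_eq_norm_mul_self, sq]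
    have hrNa : r * Na = 1 := inv_mul_cancel₀ hNa0
    have h2 : r * (r * (Na * Nc)) * Na = Nc := by
      calc r * (r * (Na * Nc)) * Na = (r * Na) * ((r * Na) * Nc) := by ring
      _ = Nc := by rw [hrNa]; ring
    have key : ∀ x : Quaternion ℝ, a * (star a * x) = Na • x := fun x => by
      rw [← mul_assoc, hNa, Quaternion.coe_mul_eq_smul]
    have key' : ∀ x : Quaternion ℝ, star a * (a * x) = Na • x := fun x => by
      rw [← mul_assoc, hNa', Quaternion.coe_mul_eq_smul]
    have keyc : ∀ x : Quaternion ℝ, c * (star c * x) = Nc • x := fun x => by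
      rw [← mul_assoc, hNc, Quaternion.coe_mul_eq_smul]
    have keyc' : ∀ x : Quaternion ℝ, star c * (c * x) = Nc • x := fun x => by
      rw [← mul_assoc, hNc', Quaternion.coe_mul_eq_smul]
    refine ⟨!![a, c; -(r • (star a * star c * a)), star a], ⟨?_, ?_⟩, by simp, by simp⟩ <;>
    · refine Matrix.ext fun i j => ?_
      rw [Matrix.star_eq_conjTranspose]
      fin_cases i <;> fin_cases j <;>
        simp [Matrix.mul_apply, Fin.sum_univ_two, Matrix.conjTranspose_apply,
          smul_mul_assoc, mul_smul_comm, mul_assoc, smul_smul, key, key', keyc, keyc',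
          Quaternion.mul_coe_eq_smul, hNa, hNa', hNc, hNc', hrNa] <;>
      · ext <;> simp [Quaternion.re_one, Quaternion.imI_one, Quaternion.imJ_one,
          Quaternion.imK_one] <;> linarith [h, h2]
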